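/- For real numbers μ_F, μ_G and positive real numbers σ_F, σ_G, the Rényi divergence of order 1/2 between the Gaussian distributions F = N(μ_F, σ_F²) and G = N(μ_G, σ_G²) on ℝ equals the closed form I_{1/2}(F‖G) = (μ_F − μ_G)² / (2(σ_F² + σ_G²)) + ln((σ_F² + σ_G²)/(2 σ_F σ_G)), i.e., twice the Bhattacharyya distance (μ_F − μ_G)²/(4(σ_F² + σ_G²)) + (1/2) ln((σ_F² + σ_G²)/(2 σ_F σ_G)). -/

import Mathlib

open MeasureTheory ProbabilityTheory
open scoped NNReal ENNReal
open Real

/-- The Rényi divergence of order `q` between two measures `F` and `G`,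
`I_q(F‖G) = (1/(q−1)) ln ∫ f^q g^{1−q} dμ`, computed with densities (Radon–Nikodym
derivatives) of `F` and `G` with respect to the common dominating measure `F + G`.
(For `q ∈ (0,1)` the value of the Hellinger-type integral does not depend on the
choice of common dominating measure.) Divergences are in nats. -/
noncomputable def renyiDiv {α : Type*} [MeasurableSpace α] (q : ℝ) (F G : Measure α) : ℝ :=
  (q - 1)⁻¹ *
    Real.log (∫ x, ((F.rnDeriv (F + G) x).toReal) ^ q *
      ((G.rnDeriv (F + G) x).toReal) ^ (1 - q) ∂(F + G))

/-- The Rényi divergence of order 1/2 between Gaussian distributions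
`F = N(μ_F, σ_F²)` and `G = N(μ_G, σ_G²)` equals
`(μ_F − μ_G)²/(2(σ_F² + σ_G²)) + ln((σ_F² + σ_G²)/(2 σ_F σ_G))`,
i.e. twice the Bhattacharyya distance. -/
theorem renyiDiv_half_gaussian (μF μG σF σG : ℝ) (hσF : 0 < σF) (hσG : 0 < σG) :
    renyiDiv (1 / 2) (gaussianReal μF (Real.toNNReal (σF ^ 2)))
        (gaussianReal μG (Real.toNNReal (σG ^ 2)))
      = (μF - μG) ^ 2 / (2 * (σF ^ 2 + σG ^ 2))
        + Real.log ((σF ^ 2 + σG ^ 2) / (2 * σF * σG)) := by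
  have ha0 : (0:ℝ) < σF ^ 2 := by positivity
  have hb0 : (0:ℝ) < σG ^ 2 := by positivity
  set a := σF ^ 2 with hadef
  set b := σG ^ 2 with hbdef
  set vF : ℝ≥0 := Real.toNNReal a with hvFdef
  set vG : ℝ≥0 := Real.toNNReal b with hvGdef
  have hvFa : (vF : ℝ) = a := Real.coe_toNNReal _ ha0.le
  have hvGb : (vG : ℝ) = b := Real.coe_toNNReal _ hb0.le
  have hvF : vF ≠ 0 := by
    simp only [hvFdef, ne_eq, Real.toNNReal_eq_zero, not_le]; exact ha0
  have hvG : vG ≠ 0 := by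
    simp only [hvGdef, ne_eq, Real.toNNReal_eq_zero, not_le]; exact hb0
  set F := gaussianReal μF vF with hFdef
  set G := gaussianReal μG vG with hGdef
  set fR := gaussianPDFReal μF vF with hfRdef
  set gR := gaussianPDFReal μG vG with hgRdef
  have hfR : ∀ x, 0 < fR x := fun x => gaussianPDFReal_pos _ _ x hvF
  have hgR : ∀ x, 0 < gR x := fun x => gaussianPDFReal_pos _ _ x hvG
  have hfRmeas : Measurable fR := measurable_gaussianPDFReal _ _
  have hgRmeas : Measurable gR := measurable_gaussianPDFReal _ _
  set pS : ℝ → ℝ≥0∞ := fun x ↦ gaussianPDF μF vF x + gaussianPDF μG vG x with hpSdef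
  set s : ℝ → ℝ≥0 := fun x ↦ (fR x + gR x).toNNReal with hsdef
  have hsmeas : Measurable s := (hfRmeas.add hgRmeas).real_toNNReal
  have hpS_coe : ∀ x, pS x = ((s x : ℝ≥0∞)) := by
    intro x
    simp only [hpSdef, hsdef, gaussianPDF]
    rw [← ENNReal.ofReal_add (hfR x).le (hgR x).le]
    rfl
  have hFG : F + G = volume.withDensity pS := by
    rw [hFdef, hGdef, gaussianReal_of_var_ne_zero _ hvF, gaussianReal_of_var_ne_zero _ hvG,
      ← withDensity_add_left (measurable_gaussianPDF _ _)]
    rfl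
  have hFG' : F + G = volume.withDensity (fun x ↦ (s x : ℝ≥0∞)) := by
    rw [hFG]; exact withDensity_congr_ae (ae_of_all _ hpS_coe)
  have hac : F + G ≪ volume :=
    Measure.AbsolutelyContinuous.add_left (gaussianReal_absolutelyContinuous _ hvF)
      (gaussianReal_absolutelyContinuous _ hvG)
  have hpS_meas : AEMeasurable pS volume :=
    ((measurable_gaussianPDF _ _).add (measurable_gaussianPDF _ _)).aemeasurable
  have hpS_ne_zero : ∀ᵐ x ∂(volume : Measure ℝ), pS x ≠ 0 := ae_of_all _ fun x ↦ by
    simp only [hpSdef, ne_eq, add_eq_zero, not_and]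
    exact fun h ↦ absurd h (gaussianPDF_pos _ hvF x).ne'
  have hpS_ne_top : ∀ᵐ x ∂(volume : Measure ℝ), pS x ≠ ∞ := ae_of_all _ fun x ↦ by
    simp [hpSdef, gaussianPDF, ENNReal.add_ne_top]
  have hdF : F.rnDeriv (F + G) =ᵐ[volume]
      fun x ↦ (pS x)⁻¹ * gaussianPDF μF vF x := by
    rw [hFG]
    filter_upwards [Measure.rnDeriv_withDensity_right F volume hpS_meas hpS_ne_zero hpS_ne_top,
      rnDeriv_gaussianReal μF vF] with x h1 h2
    rw [h1, h2]
  have hdG : G.rnDeriv (F + G) =ᵐ[volume]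
      fun x ↦ (pS x)⁻¹ * gaussianPDF μG vG x := by
    rw [hFG]
    filter_upwards [Measure.rnDeriv_withDensity_right G volume hpS_meas hpS_ne_zero hpS_ne_top,
      rnDeriv_gaussianReal μG vG] with x h1 h2
    rw [h1, h2]
  -- Step 1: reduce the Hellinger integral to a Lebesgue integral of √(fR·gR)
  have hint1 : ∫ x, ((F.rnDeriv (F + G) x).toReal) ^ (1/2 : ℝ) *
      ((G.rnDeriv (F + G) x).toReal) ^ (1 - 1/2 : ℝ) ∂(F + G)
      = ∫ x, fR x ^ (1/2 : ℝ) * gR x ^ (1/2 : ℝ) := by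
    have heq : (1 - 1/2 : ℝ) = 1/2 := by norm_num
    rw [heq]
    calc ∫ x, ((F.rnDeriv (F + G) x).toReal) ^ (1/2 : ℝ) *
        ((G.rnDeriv (F + G) x).toReal) ^ (1/2 : ℝ) ∂(F + G)
        = ∫ x, (((pS x)⁻¹ * gaussianPDF μF vF x).toReal) ^ (1/2 : ℝ) *
            (((pS x)⁻¹ * gaussianPDF μG vG x).toReal) ^ (1/2 : ℝ) ∂(F + G) := by
          refine integral_congr_ae ?_
          filter_upwards [hac.ae_eq hdF, hac.ae_eq hdG] with x h1 h2
          rw [h1, h2]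
      _ = ∫ x, s x • ((((pS x)⁻¹ * gaussianPDF μF vF x).toReal) ^ (1/2 : ℝ) *
            (((pS x)⁻¹ * gaussianPDF μG vG x).toReal) ^ (1/2 : ℝ)) := by
          rw [hFG']; exact integral_withDensity_eq_integral_smul hsmeas _
      _ = ∫ x, fR x ^ (1/2 : ℝ) * gR x ^ (1/2 : ℝ) := by
          refine integral_congr_ae (ae_of_all _ fun x ↦ ?_)
          dsimp only
          have hz : (0:ℝ) < fR x + gR x := add_pos (hfR x) (hgR x)
          have hps : pS x = ENNReal.ofReal (fR x + gR x) := by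
            simp [hpSdef, gaussianPDF, ENNReal.ofReal_add (hfR x).le (hgR x).le]
            rfl
          have htF : ((pS x)⁻¹ * gaussianPDF μF vF x).toReal = (fR x + gR x)⁻¹ * fR x := by
            rw [ENNReal.toReal_mul, ENNReal.toReal_inv, hps, ENNReal.toReal_ofReal hz.le]
            simp [gaussianPDF, ENNReal.toReal_ofReal (hfR x).le]
            left; exact ENNReal.toReal_ofReal (hfR x).le
          have htG : ((pS x)⁻¹ * gaussianPDF μG vG x).toReal = (fR x + gR x)⁻¹ * gR x := by
            rw [ENNReal.toReal_mul, ENNReal.toReal_inv, hps, ENNReal.toReal_ofReal hz.le]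
            simp [gaussianPDF, ENNReal.toReal_ofReal (hgR x).le]
            left; exact ENNReal.toReal_ofReal (hgR x).le
          have hsx : (s x : ℝ) = fR x + gR x := Real.coe_toNNReal _ hz.le
          rw [htF, htG, NNReal.smul_def, smul_eq_mul, hsx]
          rw [Real.mul_rpow (by positivity) (hfR x).le,
            Real.mul_rpow (by positivity) (hgR x).le]
          have h2 : ((fR x + gR x)⁻¹) ^ (1/2:ℝ) * ((fR x + gR x)⁻¹) ^ (1/2:ℝ)
              = (fR x + gR x)⁻¹ := by
            rw [← Real.rpow_add (by positivity)]; norm_num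
          calc (fR x + gR x) * (((fR x + gR x)⁻¹) ^ (1/2:ℝ) * fR x ^ (1/2:ℝ) *
                (((fR x + gR x)⁻¹) ^ (1/2:ℝ) * gR x ^ (1/2:ℝ)))
              = fR x ^ (1/2:ℝ) * gR x ^ (1/2:ℝ) *
                ((fR x + gR x) * (((fR x + gR x)⁻¹) ^ (1/2:ℝ) * ((fR x + gR x)⁻¹) ^ (1/2:ℝ))) := by
                ring
            _ = fR x ^ (1/2:ℝ) * gR x ^ (1/2:ℝ) := by
                rw [h2, mul_inv_cancel₀ hz.ne', mul_one]
  -- Step 2: compute the Gaussian integral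
  set k : ℝ := (a + b) / (4 * a * b) with hkdef
  set m : ℝ := (b * μF + a * μG) / (a + b) with hmdef
  set d : ℝ := (μF - μG)^2 / (4 * (a + b)) with hddef
  set C : ℝ := (Real.sqrt (2*π*a))⁻¹ ^ (1/2:ℝ) * (Real.sqrt (2*π*b))⁻¹ ^ (1/2:ℝ) with hCdef
  have hk : 0 < k := by rw [hkdef]; positivity
  have hab : (0:ℝ) < a + b := by positivity
  have hpt : ∀ x, fR x ^ (1/2 : ℝ) * gR x ^ (1/2 : ℝ)
      = C * (Real.exp (-d) * Real.exp (-(k * (x - m)^2))) := by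
    intro x
    have hfx : fR x = (Real.sqrt (2*π*a))⁻¹ * Real.exp (- (x - μF)^2 / (2*a)) := by
      rw [hfRdef]; simp only [gaussianPDFReal, hvFa]
    have hgx : gR x = (Real.sqrt (2*π*b))⁻¹ * Real.exp (- (x - μG)^2 / (2*b)) := by
      rw [hgRdef]; simp only [gaussianPDFReal, hvGb]
    rw [hfx, hgx, Real.mul_rpow (by positivity) (Real.exp_pos _).le,
      Real.mul_rpow (by positivity) (Real.exp_pos _).le, ← Real.exp_mul, ← Real.exp_mul]
    have hexp : Real.exp (- (x - μF)^2 / (2*a) * (1/2)) * Real.exp (- (x - μG)^2 / (2*b) * (1/2))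
        = Real.exp (-d) * Real.exp (-(k * (x - m)^2)) := by
      rw [← Real.exp_add, ← Real.exp_add]
      congr 1
      rw [hddef, hkdef, hmdef]
      field_simp
      ring
    calc (Real.sqrt (2*π*a))⁻¹ ^ (1/2:ℝ) * Real.exp (- (x - μF)^2 / (2*a) * (1/2)) *
          ((Real.sqrt (2*π*b))⁻¹ ^ (1/2:ℝ) * Real.exp (- (x - μG)^2 / (2*b) * (1/2)))
        = C * (Real.exp (- (x - μF)^2 / (2*a) * (1/2)) *
            Real.exp (- (x - μG)^2 / (2*b) * (1/2))) := by rw [hCdef]; ring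
      _ = C * (Real.exp (-d) * Real.exp (-(k * (x - m)^2))) := by rw [hexp]
  have hI : ∫ x, fR x ^ (1/2 : ℝ) * gR x ^ (1/2 : ℝ)
      = C * (Real.exp (-d) * Real.sqrt (π / k)) := by
    simp_rw [hpt]
    rw [integral_const_mul, integral_const_mul]
    congr 2
    calc ∫ x, Real.exp (-(k * (x - m)^2)) = ∫ y, Real.exp (-(k * y^2)) :=
          integral_sub_right_eq_self (fun y ↦ Real.exp (-(k * y^2))) m
      _ = ∫ y, Real.exp (-k * y^2) := by simp_rw [neg_mul]
      _ = Real.sqrt (π / k) := integral_gaussian k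
  -- simplify the constant
  have h12 : ∀ u : ℝ, 0 ≤ u → (u ^ (1/2:ℝ))^2 = u := fun u hu ↦ by
    rw [← Real.rpow_natCast (u ^ (1/2:ℝ)) 2, ← Real.rpow_mul hu]; norm_num
  have hCval : C * Real.sqrt (π / k) = Real.sqrt (2 * σF * σG / (a + b)) := by
    have hC0 : 0 ≤ C * Real.sqrt (π / k) := by
      rw [hCdef]; positivity
    have hsq : (C * Real.sqrt (π / k))^2 = 2 * σF * σG / (a + b) := by
      rw [mul_pow, hCdef, mul_pow, h12 _ (by positivity), h12 _ (by positivity),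
        Real.sq_sqrt (by positivity : (0:ℝ) ≤ π / k)]
      have hsa : Real.sqrt (2*π*a) = Real.sqrt (2*π) * σF := by
        rw [show (2*π*a : ℝ) = (2*π) * a by ring, Real.sqrt_mul (by positivity), hadef,
          Real.sqrt_sq hσF.le]
      have hsb : Real.sqrt (2*π*b) = Real.sqrt (2*π) * σG := by
        rw [show (2*π*b : ℝ) = (2*π) * b by ring, Real.sqrt_mul (by positivity), hbdef,
          Real.sqrt_sq hσG.le]
      have hs2 : Real.sqrt (2*π) * Real.sqrt (2*π) = 2*π := Real.mul_self_sqrt (by positivity)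
      rw [hsa, hsb, hkdef]
      set S := Real.sqrt (2*π) with hSdef
      have hπ : (0:ℝ) < S := Real.sqrt_pos.mpr (by positivity)
      have hS2 : S * S = 2*π := hs2
      field_simp
      rw [hadef, hbdef]
      linear_combination (-2 * σF^2 * σG^2) * hS2
    rw [← hsq, Real.sqrt_sq hC0]
  have hIfinal : ∫ x, fR x ^ (1/2 : ℝ) * gR x ^ (1/2 : ℝ)
      = Real.exp (-d) * Real.sqrt (2 * σF * σG / (a + b)) := by
    rw [hI, ← hCval]; ring
  -- final assembly
  simp only [renyiDiv]
  rw [hint1, hIfinal,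
    Real.log_mul (Real.exp_ne_zero _)
      (by positivity : Real.sqrt (2 * σF * σG / (a + b)) ≠ 0),
    Real.log_exp, Real.log_sqrt (by positivity)]
  have hlog : Real.log ((a + b) / (2 * σF * σG)) = - Real.log (2 * σF * σG / (a + b)) := by
    rw [← Real.log_inv, inv_div]
  rw [hlog, hddef]
  field_simp
  ring
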